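/- Let H be a marked hypergraph that is not a trivial Maker win, with |V(H)∖M(H)| ≥ 2, and suppose that J_1(𝒟_0,H) holds. Then for every m ∈ M(H), H contains no m-tadpole and no m-snake as a subhypergraph. -/
import Mathlib


namespace MB

/-- A marked hypergraph: a finite vertex set, an edge set of finite subsets of vertices,
and a set of marked vertices. -/
structure MarkedHypergraph (V : Type) where
  verts : Finset V
  edges : Finset (Finset V)
  marked : Finset V

namespace MarkedHypergraph

variable {V : Type} [DecidableEq V]

/-- The structural requirements on a marked hypergraph: nonempty vertex set, edges are
nonempty subsets of the vertex set, marked vertices are vertices. -/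
def IsValid (H : MarkedHypergraph V) : Prop :=
  H.verts.Nonempty ∧ (∀ e ∈ H.edges, e ⊆ H.verts ∧ e.Nonempty) ∧ H.marked ⊆ H.verts

/-- `k`-uniformity: every edge has exactly `k` vertices. -/
def IsUniform (H : MarkedHypergraph V) (k : ℕ) : Prop :=
  ∀ e ∈ H.edges, e.card = k

/-- `H^{+x}`: mark the vertex `x`. -/
def plus (H : MarkedHypergraph V) (x : V) : MarkedHypergraph V :=
  ⟨H.verts, H.edges, insert x H.marked⟩

/-- `H^{-y}`: remove the vertex `y` and all edges containing it. -/
def minus (H : MarkedHypergraph V) (y : V) : MarkedHypergraph V :=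
  ⟨H.verts.erase y, H.edges.filter fun e => y ∉ e, H.marked.erase y⟩

/-- `X` is a subhypergraph of `H`. -/
def IsSub (X H : MarkedHypergraph V) : Prop :=
  X.verts ⊆ H.verts ∧ X.edges ⊆ H.edges ∧ X.marked = X.verts ∩ H.marked

/-- A trivial Maker win: some edge has at most one non-marked vertex. -/
def TrivialMakerWin (H : MarkedHypergraph V) : Prop :=
  ∃ e ∈ H.edges, (e \ H.marked).card ≤ 1

theorem card_free_lt (H : MarkedHypergraph V) (x y : V)
    (hy : y ∈ (H.plus x).verts \ (H.plus x).marked) :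
    (((H.plus x).minus y).verts \ ((H.plus x).minus y).marked).card
      < (H.verts \ H.marked).card := by
  have hy' : y ∈ H.verts \ insert x H.marked := hy
  rw [Finset.mem_sdiff] at hy'
  have hyv : y ∈ H.verts := hy'.1
  have hym : y ∉ H.marked := fun h => hy'.2 (Finset.mem_insert_of_mem h)
  show (H.verts.erase y \ (insert x H.marked).erase y).card < (H.verts \ H.marked).card
  calc (H.verts.erase y \ (insert x H.marked).erase y).card
      ≤ ((H.verts \ H.marked).erase y).card := by
        apply Finset.card_le_card
        intro v hv
        rw [Finset.mem_sdiff, Finset.mem_erase] at hv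
        rw [Finset.mem_erase, Finset.mem_sdiff]
        exact ⟨hv.1.1, hv.1.2, fun hvm =>
          hv.2 (Finset.mem_erase.mpr ⟨hv.1.1, Finset.mem_insert_of_mem hvm⟩)⟩
    _ < (H.verts \ H.marked).card :=
        Finset.card_erase_lt_of_mem (Finset.mem_sdiff.mpr ⟨hyv, hym⟩)

/-- Maker win, defined by recursion on the number of non-marked vertices:
if at most one non-marked vertex remains, Maker wins iff the position is a trivial Maker
win; otherwise Maker wins iff he has a pick `x` such that for every answer `y` of Breaker,
the resulting position is a Maker win. -/
def MakerWin (H : MarkedHypergraph V) : Prop :=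
  if (H.verts \ H.marked).card ≤ 1 then TrivialMakerWin H
  else ∃ x ∈ H.verts \ H.marked,
    ∀ y ∈ (H.plus x).verts \ (H.plus x).marked, MakerWin ((H.plus x).minus y)
termination_by (H.verts \ H.marked).card
decreasing_by exact card_free_lt H _ _ (by assumption)

/-- Breaker win: not a Maker win. -/
def BreakerWin (H : MarkedHypergraph V) : Prop := ¬ H.MakerWin

open Classical in
/-- `τ_M(H)`: the minimum number of rounds Maker needs to claim a fully marked edge
(`⊤` if Breaker wins). -/
noncomputable def tauM (H : MarkedHypergraph V) : ℕ∞ :=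
  if TrivialMakerWin H then H.edges.inf fun e => ((e \ H.marked).card : ℕ∞)
  else if (H.verts \ H.marked).card ≤ 1 then (⊤ : ℕ∞)
  else 1 + (H.verts \ H.marked).inf fun x =>
    ((H.plus x).verts \ (H.plus x).marked).attach.sup fun y =>
      tauM ((H.plus x).minus y.1)
termination_by (H.verts \ H.marked).card
decreasing_by exact card_free_lt H _ _ y.2

end MarkedHypergraph

open MarkedHypergraph

variable {V : Type} [DecidableEq V]

/-- The intersection `I_H(𝒳)` of a collection `𝒳` of marked hypergraphs in `H`. -/
def inter (H : MarkedHypergraph V) (𝒳 : Set (MarkedHypergraph V)) : Set V :=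
  {y | y ∈ H.verts ∧ y ∉ H.marked ∧ ∀ X ∈ 𝒳, y ∈ X.verts}

/-- The union of a finite collection of marked hypergraphs. -/
def unionOf (O : Finset (MarkedHypergraph V)) : MarkedHypergraph V :=
  ⟨O.sup MarkedHypergraph.verts, O.sup MarkedHypergraph.edges, O.sup MarkedHypergraph.marked⟩

/-- Isomorphism of pointed marked hypergraphs. -/
def PointedIso (X : MarkedHypergraph V) (x : V) (Y : MarkedHypergraph V) (y : V) : Prop :=
  ∃ φ : V → V, Set.InjOn φ ↑X.verts ∧ X.verts.image φ = Y.verts ∧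
    (∀ e : Finset V, e ⊆ X.verts → (e ∈ X.edges ↔ e.image φ ∈ Y.edges)) ∧
    (∀ v ∈ X.verts, (v ∈ X.marked ↔ φ v ∈ Y.marked)) ∧ φ x = y

/-- `(D,x)` is a danger: `x` is a non-marked vertex and `D^{+x}` is a Maker win. -/
def IsDanger (D : MarkedHypergraph V) (x : V) : Prop :=
  x ∈ D.verts ∧ x ∉ D.marked ∧ (D.plus x).MakerWin

/-- A family of dangers: a set of pointed marked hypergraphs, all of which are dangers. -/
def IsDangerFamily (F : Set (MarkedHypergraph V × V)) : Prop :=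
  ∀ p ∈ F, IsDanger p.1 p.2

/-- The collection of all dangers at `x` in `H`: subhypergraphs `D` of `H` containing `x`
such that `D^{+x}` is a Maker win. -/
def dangersAt (H : MarkedHypergraph V) (x : V) : Set (MarkedHypergraph V) :=
  {D | D.IsValid ∧ D.IsSub H ∧ x ∈ D.verts ∧ (D.plus x).MakerWin}

/-- `xℱ(H)`: the collection of subhypergraphs `X` of `H` containing `x` such that `(X,x)`
is isomorphic to a member of the family `F`. -/
def xFam (F : Set (MarkedHypergraph V × V)) (H : MarkedHypergraph V) (x : V) :
    Set (MarkedHypergraph V) :=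
  {X | X.IsValid ∧ X.IsSub H ∧ x ∈ X.verts ∧ ∃ p ∈ F, PointedIso X x p.1 p.2}

/-- `J F r H` is the property `J_r(ℱ,H)` (for `r ≥ 1`; `J F 0 H` is `True` by convention). -/
def J (F : Set (MarkedHypergraph V × V)) : ℕ → MarkedHypergraph V → Prop
  | 0, _ => True
  | r + 1, H => ∀ x ∈ H.verts \ H.marked,
      ∃ y ∈ inter (H.plus x) (xFam F H x), J F r ((H.plus x).minus y)

/-- `P` is an `ab`-path (in a 3-uniform setting) of length `L`. -/
def IsPathLen (P : MarkedHypergraph V) (a b : V) (L : ℕ) : Prop :=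
  (L = 0 ∧ a = b ∧ P.verts = {a} ∧ P.edges = ∅) ∨
  (1 ≤ L ∧ a ≠ b ∧ ∃ e : ℕ → Finset V,
    P.edges = (Finset.range L).image e ∧
    P.verts = (Finset.range L).biUnion e ∧
    (∀ i, i < L → (e i).card = 3) ∧
    (∀ i j, i < L → j < L → i ≠ j → e i ≠ e j) ∧
    a ∈ e 0 ∧ b ∈ e (L - 1) ∧
    (∀ i, i + 1 < L → (e i ∩ e (i + 1)).card = 1) ∧
    (∀ i j, i + 2 ≤ j → j < L → e i ∩ e j = ∅) ∧
    (∀ i, 1 ≤ i → i < L → a ∉ e i) ∧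
    (∀ i, i + 1 < L → b ∉ e i))

/-- `P` is an `ab`-path. -/
def IsPath (P : MarkedHypergraph V) (a b : V) : Prop := ∃ L, IsPathLen P a b L

/-- `C` is an `a`-cycle of length `L`. -/
def IsCycleLen (C : MarkedHypergraph V) (a : V) (L : ℕ) : Prop :=
  2 ≤ L ∧ ∃ e : ℕ → Finset V,
    C.edges = (Finset.range L).image e ∧
    C.verts = (Finset.range L).biUnion e ∧
    (∀ i, i < L → (e i).card = 3) ∧
    (∀ i j, i < L → j < L → i ≠ j → e i ≠ e j) ∧
    a ∈ e 0 ∧ a ∈ e (L - 1) ∧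
    (∀ i, 0 < i → i + 1 < L → a ∉ e i) ∧
    (L = 2 → (e 0 ∩ e 1).card = 2) ∧
    (3 ≤ L → (e 0 ∩ e (L - 1) = {a} ∧ ∀ i, i + 1 < L → (e i ∩ e (i + 1)).card = 1)) ∧
    (∀ i j, i < j → j < L → 2 ≤ j - i → j - i ≤ L - 2 → e i ∩ e j = ∅)

/-- `C` is an `a`-cycle. -/
def IsCycle (C : MarkedHypergraph V) (a : V) : Prop := ∃ L, IsCycleLen C a L

/-- `T` is an `a`-tadpole: the union of an `ab`-path and a `b`-cycle meeting only at `b`. -/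
def IsTadpole (T : MarkedHypergraph V) (a : V) : Prop :=
  ∃ b P C, IsPath P a b ∧ IsCycle C b ∧ P.verts ∩ C.verts = {b} ∧
    T.verts = P.verts ∪ C.verts ∧ T.edges = P.edges ∪ C.edges

/-- `S` is an `x`-snake: an `xm`-path of positive length with `m` marked. -/
def IsSnake (S : MarkedHypergraph V) (x : V) : Prop :=
  ∃ m L, 1 ≤ L ∧ IsPathLen S x m L ∧ m ∈ S.marked

/-- `N` is a nunchaku: an `ab`-path of positive length with marked set exactly `{a,b}`. -/
def IsNunchaku (N : MarkedHypergraph V) : Prop :=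
  ∃ a b L, 1 ≤ L ∧ IsPathLen N a b L ∧ N.marked = {a, b}

/-- `C` is an `a`-necklace: an `a`-cycle with marked set exactly `{a}`. -/
def IsNecklace (C : MarkedHypergraph V) (a : V) : Prop :=
  ∃ L, IsCycleLen C a L ∧ C.marked = {a}

/-- The family `𝒮` of pointed snakes with exactly one marked vertex. -/
def famS : Set (MarkedHypergraph V × V) := {p | IsSnake p.1 p.2 ∧ p.1.marked.card = 1}

/-- The family `𝒞` of pointed cycles with no marked vertex. -/
def famC : Set (MarkedHypergraph V × V) := {p | IsCycle p.1 p.2 ∧ p.1.marked = ∅}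

/-- The family `𝒯` of pointed tadpoles with no marked vertex. -/
def famT : Set (MarkedHypergraph V × V) := {p | IsTadpole p.1 p.2 ∧ p.1.marked = ∅}

/-- `𝒟₀ = 𝒮 ∪ 𝒞`. -/
def famD0 : Set (MarkedHypergraph V × V) := famS ∪ famC

/-- `𝒟₁ = 𝒮 ∪ 𝒯`. -/
def famD1 : Set (MarkedHypergraph V × V) := famS ∪ famT

/-- `obs(ℱ)`: pointed marked hypergraphs `(D,x)` which, for some `ℱ`-dangerous vertex `z`,
are the union of a collection `𝒪` of subhypergraphs, each of which is (or becomes, once `x`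
is marked) an `ℱ`-danger at `z`, with `I_{D^{+x+z}}(𝒪) = ∅`. -/
def obs (F : Set (MarkedHypergraph V × V)) : Set (MarkedHypergraph V × V) :=
  {p | p.2 ∈ p.1.verts ∧ p.2 ∉ p.1.marked ∧
    ∃ z, z ∈ p.1.verts ∧ z ∉ p.1.marked ∧ z ≠ p.2 ∧
      ∃ O : Set (MarkedHypergraph V),
        (∀ X ∈ O, X.IsValid ∧ X.IsSub p.1) ∧
        (∀ X ∈ O, p.2 ∈ X.verts → X.plus p.2 ∈ xFam F (p.1.plus p.2) z) ∧
        (∀ X ∈ O, p.2 ∉ X.verts → X ∈ xFam F p.1 z) ∧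
        (∀ v ∈ p.1.verts, ∃ X ∈ O, v ∈ X.verts) ∧
        (∀ e ∈ p.1.edges, ∃ X ∈ O, e ∈ X.edges) ∧
        (∀ m ∈ p.1.marked, ∃ X ∈ O, m ∈ X.marked) ∧
        inter ((p.1.plus p.2).plus z) O = ∅}

/-- `obsr(ℱ)`: the members `(D,x)` of `obs(ℱ)` such that `D` contains no `ℱ`-danger at `x`. -/
def obsr (F : Set (MarkedHypergraph V × V)) : Set (MarkedHypergraph V × V) :=
  {p | p ∈ obs F ∧ xFam F p.1 p.2 = ∅}

/-- `ℱ^{*r}`. -/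
def star (F : Set (MarkedHypergraph V × V)) : ℕ → Set (MarkedHypergraph V × V)
  | 0 => F
  | r + 1 => F ∪ obs (star F r)

/-- `𝒟₂ = 𝒟₁ ∪ obsr(𝒟₁)`. -/
def famD2 : Set (MarkedHypergraph V × V) := famD1 ∪ obsr famD1

/-- The lengths of nunchakus contained in `H`. -/
def nunchakuLengths (H : MarkedHypergraph V) : Set ℕ :=
  {L | 1 ≤ L ∧ ∃ N a b, N.IsSub H ∧ IsPathLen N a b L ∧ N.marked = {a, b}}

/-- `H` contains a fully marked edge, a nunchaku, or a necklace. -/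
def WinPattern (H : MarkedHypergraph V) : Prop :=
  (∃ e ∈ H.edges, e ⊆ H.marked) ∨ (∃ N, N.IsSub H ∧ IsNunchaku N) ∨
    (∃ C a, C.IsSub H ∧ IsNecklace C a)

/-- `Wk k H`: Maker can force that after `k` rounds of play the updated marked hypergraph
contains a fully marked edge, a nunchaku or a necklace. -/
def Wk : ℕ → MarkedHypergraph V → Prop
  | 0, H => WinPattern H
  | k + 1, H => ∃ x ∈ H.verts \ H.marked,
      ∀ y ∈ (H.plus x).verts \ (H.plus x).marked, Wk k ((H.plus x).minus y)

end MB

section Aux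

open MB MB.MarkedHypergraph Finset

variable {V : Type} [DecidableEq V]

/-- Data of a path living inside `H` (edges of `H` only). -/
structure PData (H : MB.MarkedHypergraph V) (a b : V) (L : ℕ) where
  e : ℕ → Finset V
  hL : 1 ≤ L
  hab : a ≠ b
  hsub : ∀ i, i < L → e i ∈ H.edges
  hcard : ∀ i, i < L → (e i).card = 3
  hdist : ∀ i j, i < L → j < L → i ≠ j → e i ≠ e j
  ha : a ∈ e 0
  hb : b ∈ e (L - 1)
  hcons : ∀ i, i + 1 < L → (e i ∩ e (i + 1)).card = 1
  hfar : ∀ i j, i + 2 ≤ j → j < L → e i ∩ e j = ∅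
  hna : ∀ i, 1 ≤ i → i < L → a ∉ e i
  hnb : ∀ i, i + 1 < L → b ∉ e i

/-- Data of a cycle living inside `H`. -/
structure CData (H : MB.MarkedHypergraph V) (a : V) (L : ℕ) where
  e : ℕ → Finset V
  hL : 2 ≤ L
  hsub : ∀ i, i < L → e i ∈ H.edges
  hcard : ∀ i, i < L → (e i).card = 3
  hdist : ∀ i j, i < L → j < L → i ≠ j → e i ≠ e j
  ha0 : a ∈ e 0
  haL : a ∈ e (L - 1)
  hna : ∀ i, 0 < i → i + 1 < L → a ∉ e i
  h2 : L = 2 → (e 0 ∩ e 1).card = 2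
  h3 : 3 ≤ L → (e 0 ∩ e (L - 1) = {a} ∧ ∀ i, i + 1 < L → (e i ∩ e (i + 1)).card = 1)
  hfar : ∀ i j, i < j → j < L → 2 ≤ j - i → j - i ≤ L - 2 → e i ∩ e j = ∅

theorem pdata_of_isPathLen {H P : MB.MarkedHypergraph V} {a b : V} {L : ℕ}
    (hPE : P.edges ⊆ H.edges) (hp : MB.IsPathLen P a b L) (hL : 1 ≤ L) :
    ∃ pd : PData H a b L, P.verts = (Finset.range L).biUnion pd.e ∧
      P.edges = (Finset.range L).image pd.e := by
  rcases hp with ⟨h0, _⟩ | ⟨_, hab, e, hed, hv, hcard, hdist, ha, hb, hcons, hfar, hna, hnb⟩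
  · omega
  · have hsub : ∀ i, i < L → e i ∈ H.edges := fun i hi =>
      hPE (hed ▸ Finset.mem_image_of_mem e (Finset.mem_range.mpr hi))
    exact ⟨⟨e, hL, hab, hsub, hcard, hdist, ha, hb, hcons, hfar, hna, hnb⟩, hv, hed⟩

theorem cdata_of_isCycleLen {H C : MB.MarkedHypergraph V} {a : V} {L : ℕ}
    (hCE : C.edges ⊆ H.edges) (hc : MB.IsCycleLen C a L) :
    ∃ cd : CData H a L, C.verts = (Finset.range L).biUnion cd.e ∧
      C.edges = (Finset.range L).image cd.e := by
  obtain ⟨hL, e, hed, hv, hcard, hdist, ha0, haL, hna, h2, h3, hfar⟩ := hc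
  have hsub : ∀ i, i < L → e i ∈ H.edges := fun i hi =>
    hCE (hed ▸ Finset.mem_image_of_mem e (Finset.mem_range.mpr hi))
  exact ⟨⟨e, hL, hsub, hcard, hdist, ha0, haL, hna, h2, h3, hfar⟩, hv, hed⟩

/-- A single-edge path. -/
def singlePD (H : MB.MarkedHypergraph V) {a b : V} {f : Finset V} (hf : f ∈ H.edges)
    (hc : f.card = 3) (haf : a ∈ f) (hbf : b ∈ f) (hab : a ≠ b) : PData H a b 1 where
  e := fun _ => f
  hL := le_refl 1
  hab := hab
  hsub := fun _ _ => hf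
  hcard := fun _ _ => hc
  hdist := fun i j hi hj hne => absurd (show i = j by omega) hne
  ha := haf
  hb := hbf
  hcons := fun i hi => absurd hi (by omega)
  hfar := fun i j h2 hj => absurd hj (by omega)
  hna := fun i h1 hi => absurd hi (by omega)
  hnb := fun i hi => absurd hi (by omega)

@[simp] theorem singlePD_e {H : MB.MarkedHypergraph V} {a b : V} {f : Finset V}
    (hf : f ∈ H.edges) (hc : f.card = 3) (haf : a ∈ f) (hbf : b ∈ f) (hab : a ≠ b) (j : ℕ) :
    (singlePD H hf hc haf hbf hab).e j = f := rfl

/-- Truncating a path at an intermediate vertex. -/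
def truncPD {H : MB.MarkedHypergraph V} {a b : V} {L : ℕ} (pd : PData H a b L)
    (i : ℕ) (w : V) (hi : i < L) (hw : w ∈ pd.e i) (hwa : w ≠ a)
    (hmin : ∀ j, j < i → w ∉ pd.e j) : PData H a w (i + 1) where
  e := pd.e
  hL := by omega
  hab := Ne.symm hwa
  hsub := fun j hj => pd.hsub j (by omega)
  hcard := fun j hj => pd.hcard j (by omega)
  hdist := fun j k hj hk => pd.hdist j k (by omega) (by omega)
  ha := pd.ha
  hb := by simpa using hw
  hcons := fun j hj => pd.hcons j (by omega)
  hfar := fun j k h2 hk => pd.hfar j k h2 (by omega)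
  hna := fun j h1 hj => pd.hna j h1 (by omega)
  hnb := fun j hj => hmin j (by omega)

/-- The tail of a path, starting from the connector `u ∈ e 0 ∩ e 1`. -/
def tailPD {H : MB.MarkedHypergraph V} {a b : V} {L : ℕ} (pd : PData H a b L)
    (hL2 : 2 ≤ L) (u : V) (hu0 : u ∈ pd.e 0) (hu1 : u ∈ pd.e 1) (hub : u ≠ b) :
    PData H u b (L - 1) where
  e := fun j => pd.e (j + 1)
  hL := by omega
  hab := hub
  hsub := fun j hj => pd.hsub (j + 1) (by omega)
  hcard := fun j hj => pd.hcard (j + 1) (by omega)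
  hdist := fun j k hj hk hne => pd.hdist (j + 1) (k + 1) (by omega) (by omega) (by omega)
  ha := hu1
  hb := by
    show b ∈ pd.e (L - 1 - 1 + 1)
    rw [show L - 1 - 1 + 1 = L - 1 by omega]; exact pd.hb
  hcons := fun j hj => pd.hcons (j + 1) (by omega)
  hfar := fun j k h2 hk => pd.hfar (j + 1) (k + 1) (by omega) (by omega)
  hna := fun j h1 hj => by
    have := pd.hfar 0 (j + 1) (by omega) (by omega)
    intro hmem
    exact absurd (Finset.mem_inter.mpr ⟨hu0, hmem⟩) (by simp [this])
  hnb := fun j hj => pd.hnb (j + 1) (by omega)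

@[simp] theorem tailPD_e {H : MB.MarkedHypergraph V} {a b : V} {L : ℕ} (pd : PData H a b L)
    (hL2 : 2 ≤ L) (u : V) (hu0 : u ∈ pd.e 0) (hu1 : u ∈ pd.e 1) (hub : u ≠ b) (j : ℕ) :
    (tailPD pd hL2 u hu0 hu1 hub).e j = pd.e (j + 1) := rfl

/-- The tail of a cycle, a path from the connector `u ∈ e 0 ∩ e 1` back to the root. -/
def ctailPD {H : MB.MarkedHypergraph V} {a : V} {L : ℕ} (cd : CData H a L)
    (u : V) (hu0 : u ∈ cd.e 0) (hu1 : u ∈ cd.e 1) (hua : u ≠ a) :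
    PData H u a (L - 1) where
  e := fun j => cd.e (j + 1)
  hL := by have := cd.hL; omega
  hab := hua
  hsub := fun j hj => cd.hsub (j + 1) (by have := cd.hL; omega)
  hcard := fun j hj => cd.hcard (j + 1) (by have := cd.hL; omega)
  hdist := fun j k hj hk hne => cd.hdist (j + 1) (k + 1) (by have := cd.hL; omega)
    (by have := cd.hL; omega) (by omega)
  ha := hu1
  hb := by
    show a ∈ cd.e (L - 1 - 1 + 1)
    rw [show L - 1 - 1 + 1 = L - 1 by have := cd.hL; omega]; exact cd.haL
  hcons := fun j hj => (cd.h3 (by have := cd.hL; omega)).2 (j + 1) (by have := cd.hL; omega)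
  hfar := fun j k h2 hk => cd.hfar (j + 1) (k + 1) (by omega) (by have := cd.hL; omega)
    (by omega) (by have := cd.hL; omega)
  hna := fun j h1 hj => by
    have hL := cd.hL
    intro hmem
    by_cases hend : j + 1 = L - 1
    · have h3 := (cd.h3 (by omega)).1
      have : u ∈ cd.e 0 ∩ cd.e (L - 1) := Finset.mem_inter.mpr ⟨hu0, hend ▸ hmem⟩
      rw [h3, Finset.mem_singleton] at this
      exact hua this
    · have := cd.hfar 0 (j + 1) (by omega) (by omega) (by omega) (by omega)
      exact absurd (Finset.mem_inter.mpr ⟨hu0, hmem⟩) (by simp [this])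
  hnb := fun j hj => cd.hna (j + 1) (by omega) (by have := cd.hL; omega)

@[simp] theorem ctailPD_e {H : MB.MarkedHypergraph V} {a : V} {L : ℕ} (cd : CData H a L)
    (u : V) (hu0 : u ∈ cd.e 0) (hu1 : u ∈ cd.e 1) (hua : u ≠ a) (j : ℕ) :
    (ctailPD cd u hu0 hu1 hua).e j = cd.e (j + 1) := rfl

/-- Concatenation of an `a b`-path and a `b c`-path whose ambient vertex sets
meet exactly in `b`. -/
def concatPD {H : MB.MarkedHypergraph V} {a b c : V} {l k : ℕ}
    (p : PData H a b l) (q : PData H b c k) (SP SC : Finset V)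
    (hp : ∀ i, i < l → p.e i ⊆ SP) (hq : ∀ j, j < k → q.e j ⊆ SC)
    (hmeet : SP ∩ SC = {b}) : PData H a c (l + k) := by
  have hl := p.hL
  have hk := q.hL
  have hmix : ∀ i j, i < l → j < k → p.e i ∩ q.e j ⊆ {b} := by
    intro i j hi hj x hx
    rw [Finset.mem_inter] at hx
    rw [← hmeet]
    exact Finset.mem_inter.mpr ⟨hp i hi hx.1, hq j hj hx.2⟩
  have hac : a ≠ c := by
    intro h
    have h1 : a ∈ p.e 0 ∩ q.e (k - 1) := Finset.mem_inter.mpr ⟨p.ha, h ▸ q.hb⟩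
    have := hmix 0 (k - 1) (by omega) (by omega) h1
    rw [Finset.mem_singleton] at this
    exact p.hab this
  refine ⟨fun i => if i < l then p.e i else q.e (i - l), by omega, hac, ?_, ?_, ?_, ?_, ?_, ?_,
    ?_, ?_, ?_⟩ <;> beta_reduce
  · intro i hi
    split_ifs with h
    · exact p.hsub i h
    · exact q.hsub (i - l) (by omega)
  · intro i hi
    split_ifs with h
    · exact p.hcard i h
    · exact q.hcard (i - l) (by omega)
  · intro i j hi hj hne
    split_ifs with h1 h2 h2
    · exact p.hdist i j h1 h2 hne
    · intro heq
      have hsub3 : p.e i ⊆ {b} := by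
        intro x hx
        exact hmix i (j - l) h1 (by omega) (Finset.mem_inter.mpr ⟨hx, heq ▸ hx⟩)
      have := Finset.card_le_card hsub3
      rw [p.hcard i h1, Finset.card_singleton] at this
      omega
    · intro heq
      have hsub3 : q.e (i - l) ⊆ {b} := by
        intro x hx
        exact hmix j (i - l) h2 (by omega) (Finset.mem_inter.mpr ⟨heq ▸ hx, hx⟩)
      have := Finset.card_le_card hsub3
      rw [q.hcard (i - l) (by omega), Finset.card_singleton] at this
      omega
    · exact q.hdist (i - l) (j - l) (by omega) (by omega) (by omega)
  · rw [if_pos (show 0 < l by omega)]; exact p.ha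
  · have h : ¬ (l + k - 1 < l) := by omega
    rw [if_neg h]
    have h2 : l + k - 1 - l = k - 1 := by omega
    rw [h2]; exact q.hb
  · intro i hi
    rcases lt_trichotomy (i + 1) l with h | h | h
    · rw [if_pos (by omega), if_pos h]
      exact p.hcons i h
    · rw [if_pos (by omega), if_neg (by omega)]
      have h2 : i + 1 - l = 0 := by omega
      have h3 : i = l - 1 := by omega
      rw [h2, h3]
      have hsub3 : p.e (l - 1) ∩ q.e 0 = {b} := by
        refine Finset.Subset.antisymm (hmix (l - 1) 0 (by omega) (by omega)) ?_
        simp only [Finset.singleton_subset_iff, Finset.mem_inter]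
        exact ⟨by simpa using p.hb, q.ha⟩
      rw [hsub3, Finset.card_singleton]
    · rw [if_neg (by omega), if_neg (by omega)]
      have h2 : i + 1 - l = (i - l) + 1 := by omega
      rw [h2]
      exact q.hcons (i - l) (by omega)
  · intro i j h2 hj
    rcases lt_or_ge j l with h | h
    · rw [if_pos (by omega), if_pos h]
      exact p.hfar i j h2 h
    · rcases lt_or_ge i l with h4 | h4
      · rw [if_pos h4, if_neg (by omega)]
        rw [Finset.eq_empty_iff_forall_notMem]
        intro x hx
        have hxb := hmix i (j - l) h4 (by omega) hx
        rw [Finset.mem_singleton] at hxb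
        subst hxb
        rw [Finset.mem_inter] at hx
        rcases lt_or_ge (i + 1) l with h5 | h5
        · exact p.hnb i h5 hx.1
        · have h6 : 1 ≤ j - l := by omega
          exact q.hna (j - l) h6 (by omega) hx.2
      · rw [if_neg (by omega), if_neg (by omega)]
        exact q.hfar (i - l) (j - l) (by omega) (by omega)
  · intro i h1 hi
    split_ifs with h
    · exact p.hna i h1 h
    · intro hmem
      have : a ∈ p.e 0 ∩ q.e (i - l) := Finset.mem_inter.mpr ⟨p.ha, hmem⟩
      have := hmix 0 (i - l) (by omega) (by omega) this
      rw [Finset.mem_singleton] at this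
      exact p.hab this
  · intro i hi
    split_ifs with h
    · intro hmem
      have : c ∈ p.e i ∩ q.e (k - 1) := Finset.mem_inter.mpr ⟨hmem, q.hb⟩
      have := hmix i (k - 1) h (by omega) this
      rw [Finset.mem_singleton] at this
      exact q.hab this.symm
    · exact q.hnb (i - l) (by omega)

theorem mem_xFam_self {H X : MB.MarkedHypergraph V} {x : V}
    {F : Set (MB.MarkedHypergraph V × V)}
    (hv : X.IsValid) (hs : X.IsSub H) (hx : x ∈ X.verts) (hF : (X, x) ∈ F) :
    X ∈ MB.xFam F H x :=
  ⟨hv, hs, hx, ⟨(X, x), hF, ⟨id, Set.injOn_id _, Finset.image_id,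
    fun e _ => by rw [Finset.image_id], fun v _ => Iff.rfl, rfl⟩⟩⟩

theorem lemJ {H : MB.MarkedHypergraph V} (hJ : MB.J MB.famD0 1 H) {u : V}
    (hu : u ∈ H.verts) (hum : u ∉ H.marked) {X1 X2 : MB.MarkedHypergraph V}
    (h1 : X1 ∈ MB.xFam MB.famD0 H u) (h2 : X2 ∈ MB.xFam MB.famD0 H u)
    (hy : ∀ y, y ∈ X1.verts → y ∈ X2.verts → y ∉ H.marked → y = u) : False := by
  obtain ⟨y, hy1, -⟩ := hJ u (Finset.mem_sdiff.mpr ⟨hu, hum⟩)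
  obtain ⟨hyv, hym, hall⟩ := hy1
  have hyu : y ≠ u := fun h => hym (by rw [h]; exact Finset.mem_insert_self _ _)
  have hyM : y ∉ H.marked := fun h => hym (Finset.mem_insert_of_mem h)
  exact hyu (hy y (hall X1 h1) (hall X2 h2) hyM)

theorem isPathLen_congr {P Q : MB.MarkedHypergraph V} (hv : Q.verts = P.verts)
    (he : Q.edges = P.edges) {a b : V} {L : ℕ} (h : MB.IsPathLen P a b L) :
    MB.IsPathLen Q a b L := by
  unfold MB.IsPathLen at *
  rw [hv, he]
  exact h

theorem isCycleLen_congr {P Q : MB.MarkedHypergraph V} (hv : Q.verts = P.verts)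
    (he : Q.edges = P.edges) {a : V} {L : ℕ} (h : MB.IsCycleLen P a L) :
    MB.IsCycleLen Q a L := by
  unfold MB.IsCycleLen at *
  rw [hv, he]
  exact h

theorem isPathLen_rev {P : MB.MarkedHypergraph V} {a b : V} {L : ℕ}
    (h : MB.IsPathLen P a b L) : MB.IsPathLen P b a L := by
  rcases h with ⟨h0, hab, hv, he⟩ | ⟨hL, hab, e, hed, hv, hcard, hdist, ha, hb, hcons, hfar,
    hna, hnb⟩
  · exact Or.inl ⟨h0, hab.symm, hab ▸ hv, he⟩
  · refine Or.inr ⟨hL, hab.symm, fun i => e (L - 1 - i), ?_, ?_, ?_, ?_, ?_, ?_, ?_, ?_, ?_, ?_⟩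
    · rw [hed]
      apply Finset.ext
      intro f
      simp only [Finset.mem_image, Finset.mem_range]
      constructor
      · rintro ⟨i, hi, h⟩
        refine ⟨L - 1 - i, by omega, ?_⟩
        show e (L - 1 - (L - 1 - i)) = f
        rw [show L - 1 - (L - 1 - i) = i by omega]
        exact h
      · rintro ⟨i, hi, h⟩
        exact ⟨L - 1 - i, by omega, h⟩
    · rw [hv]
      apply Finset.ext
      intro y
      simp only [Finset.mem_biUnion, Finset.mem_range]
      constructor
      · rintro ⟨i, hi, hyi⟩
        refine ⟨L - 1 - i, by omega, ?_⟩
        show y ∈ e (L - 1 - (L - 1 - i))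
        rw [show L - 1 - (L - 1 - i) = i by omega]
        exact hyi
      · rintro ⟨i, hi, hyi⟩
        exact ⟨L - 1 - i, by omega, hyi⟩
      
    · intro i hi; exact hcard (L - 1 - i) (by omega)
    · intro i j hi hj hne
      show e (L - 1 - i) ≠ e (L - 1 - j)
      exact hdist (L - 1 - i) (L - 1 - j) (by omega) (by omega) (by omega)
    · exact hb
    · show a ∈ e (L - 1 - (L - 1))
      rw [show L - 1 - (L - 1) = 0 by omega]; exact ha
    · intro i hi
      show (e (L - 1 - i) ∩ e (L - 1 - (i + 1))).card = 1
      rw [Finset.inter_comm, show L - 1 - i = (L - 1 - (i + 1)) + 1 by omega]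
      exact hcons (L - 1 - (i + 1)) (by omega)
    · intro i j h2 hj
      show e (L - 1 - i) ∩ e (L - 1 - j) = ∅
      rw [Finset.inter_comm]
      exact hfar (L - 1 - j) (L - 1 - i) (by omega) (by omega)
    · intro i h1 hi
      exact hnb (L - 1 - i) (by omega)
    · intro i hi
      exact hna (L - 1 - i) (by omega) (by omega)

/-- Building a snake danger member of `x𝒟₀(H)` from path data ending at a marked vertex. -/
theorem snakeX {H : MB.MarkedHypergraph V} (hval : H.IsValid) {u a : V} {L : ℕ}
    (pd : PData H u a L) (haM : a ∈ H.marked)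
    (hoth : ∀ i, i < L → ∀ w, w ∈ pd.e i → w ≠ a → w ∉ H.marked) :
    (⟨(Finset.range L).biUnion pd.e, (Finset.range L).image pd.e,
      ((Finset.range L).biUnion pd.e) ∩ H.marked⟩ : MB.MarkedHypergraph V)
      ∈ MB.xFam MB.famD0 H u := by
  have hL := pd.hL
  have hmarked : ((Finset.range L).biUnion pd.e) ∩ H.marked = {a} := by
    apply Finset.ext
    intro w
    rw [Finset.mem_inter, Finset.mem_biUnion, Finset.mem_singleton]
    constructor
    · rintro ⟨⟨i, hi, hwi⟩, hwM⟩
      by_contra hne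
      exact hoth i (Finset.mem_range.mp hi) w hwi hne hwM
    · rintro rfl
      exact ⟨⟨L - 1, Finset.mem_range.mpr (by omega), pd.hb⟩, haM⟩
  have hu : u ∈ (Finset.range L).biUnion pd.e :=
    Finset.mem_biUnion.mpr ⟨0, Finset.mem_range.mpr (by omega), pd.ha⟩
  have hpath : MB.IsPathLen
      (⟨(Finset.range L).biUnion pd.e, (Finset.range L).image pd.e,
        ((Finset.range L).biUnion pd.e) ∩ H.marked⟩ : MB.MarkedHypergraph V) u a L :=
    Or.inr ⟨pd.hL, pd.hab, pd.e, rfl, rfl, pd.hcard, pd.hdist, pd.ha, pd.hb, pd.hcons,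
      pd.hfar, pd.hna, pd.hnb⟩
  apply mem_xFam_self
  · refine ⟨⟨u, hu⟩, ?_, Finset.inter_subset_left⟩
    intro f hf
    rw [Finset.mem_image] at hf
    obtain ⟨i, hi, rfl⟩ := hf
    refine ⟨Finset.subset_biUnion_of_mem pd.e hi, ?_⟩
    have := pd.hcard i (Finset.mem_range.mp hi)
    exact Finset.card_pos.mp (by omega)
  · refine ⟨?_, ?_, rfl⟩
    · intro y hy
      rw [Finset.mem_biUnion] at hy
      obtain ⟨i, hi, hyi⟩ := hy
      exact (hval.2.1 _ (pd.hsub i (Finset.mem_range.mp hi))).1 hyi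
    · intro f hf
      rw [Finset.mem_image] at hf
      obtain ⟨i, hi, rfl⟩ := hf
      exact pd.hsub i (Finset.mem_range.mp hi)
  · exact hu
  · refine Or.inl ⟨⟨a, L, pd.hL, hpath, ?_⟩, ?_⟩
    · show a ∈ ((Finset.range L).biUnion pd.e) ∩ H.marked
      rw [hmarked]; exact Finset.mem_singleton_self a
    · show (((Finset.range L).biUnion pd.e) ∩ H.marked).card = 1
      rw [hmarked]; exact Finset.card_singleton a

/-- Lemma A: `H` contains no path of positive length between two marked vertices. -/
theorem lemA (H : MB.MarkedHypergraph V) (hval : H.IsValid) (hnt : ¬ H.TrivialMakerWin)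
    (hJ : MB.J MB.famD0 1 H) :
    ∀ L a b, PData H a b L → a ∈ H.marked → b ∈ H.marked → False := by
  intro L
  induction L using Nat.strong_induction_on with
  | _ L IH =>
    intro a b pd haM hbM
    have hL := pd.hL
    rcases eq_or_lt_of_le hL with h1 | h2
    · -- L = 1 : trivial Maker win
      have h1 : L = 1 := h1.symm
      subst h1
      apply hnt
      refine ⟨pd.e 0, pd.hsub 0 (by omega), ?_⟩
      have habs : ({a, b} : Finset V) ⊆ pd.e 0 := by
        intro x hx
        rcases Finset.mem_insert.mp hx with rfl | hx
        · exact pd.ha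
        · rw [Finset.mem_singleton] at hx; subst hx; simpa using pd.hb
      have hsub2 : pd.e 0 \ H.marked ⊆ pd.e 0 \ {a, b} := by
        apply Finset.sdiff_subset_sdiff (le_refl _)
        intro x hx
        rcases Finset.mem_insert.mp hx with rfl | hx
        · exact haM
        · rw [Finset.mem_singleton] at hx; subst hx; exact hbM
      have hcard2 : (pd.e 0 \ ({a, b} : Finset V)).card = 1 := by
        rw [Finset.card_sdiff_of_subset habs, Finset.card_pair pd.hab, pd.hcard 0 (by omega)]
      calc (pd.e 0 \ H.marked).card ≤ (pd.e 0 \ ({a, b} : Finset V)).card :=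
            Finset.card_le_card hsub2
        _ ≤ 1 := by omega
    · -- 2 ≤ L
      by_cases hw : ∃ i, i < L ∧ ∃ w, w ∈ pd.e i ∧ w ≠ a ∧ w ≠ b ∧ w ∈ H.marked
      · obtain ⟨i, hi, w, hwi, hwa, hwb, hwM⟩ := hw
        by_cases hlast : w ∈ pd.e (L - 1)
        · exact IH 1 (by omega) w b
            (singlePD H (pd.hsub (L - 1) (by omega)) (pd.hcard (L - 1) (by omega))
              hlast pd.hb hwb) hwM hbM
        · have hex : ∃ j, j < L ∧ w ∈ pd.e j := ⟨i, hi, hwi⟩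
          obtain ⟨hi0L, hwi0⟩ := Nat.find_spec hex
          have hmin : ∀ j, j < Nat.find hex → w ∉ pd.e j := fun j hj hmem =>
            Nat.find_min hex hj ⟨by omega, hmem⟩
          have hne : Nat.find hex ≠ L - 1 := fun h => hlast (h ▸ hwi0)
          exact IH (Nat.find hex + 1) (by omega) a w
            (truncPD pd (Nat.find hex) w hi0L hwi0 hwa hmin) haM hwM
      · push_neg at hw
        have huu : ∃ u, u ∈ pd.e 0 ∩ pd.e 1 := by
          obtain ⟨u, hu⟩ := Finset.card_eq_one.mp (pd.hcons 0 (by omega))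
          exact ⟨u, hu ▸ Finset.mem_singleton_self u⟩
        obtain ⟨u, huu⟩ := huu
        obtain ⟨hu0, hu1⟩ := Finset.mem_inter.mp huu
        have hua : u ≠ a := fun h => pd.hna 1 (le_refl 1) (by omega) (h ▸ hu1)
        have hub : u ≠ b := fun h => pd.hnb 0 (by omega) (h ▸ hu0)
        have huM : u ∉ H.marked := hw 0 (by omega) u hu0 hua hub
        have huV : u ∈ H.verts := (hval.2.1 _ (pd.hsub 0 (by omega))).1 hu0
        refine lemJ hJ huV huM
          (snakeX hval
            (singlePD H (pd.hsub 0 (by omega)) (pd.hcard 0 (by omega)) hu0 pd.ha hua) haM ?_)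
          (snakeX hval (tailPD pd (by omega) u hu0 hu1 hub) hbM ?_) ?_
        · simp only [singlePD_e]
          intro i hi w hwi hwa2
          by_cases hwb2 : w = b
          · subst hwb2; exact absurd hwi (pd.hnb 0 (by omega))
          · exact hw 0 (by omega) w hwi hwa2 hwb2
        · simp only [tailPD_e]
          intro i hi w hwi hwb2
          by_cases hwa2 : w = a
          · subst hwa2; exact absurd hwi (pd.hna (i + 1) (by omega) (by omega))
          · exact hw (i + 1) (by omega) w hwi hwa2 hwb2
        · intro y hy1 hy2 hyM
          simp only [Finset.mem_biUnion, Finset.mem_range, singlePD_e] at hy1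
          simp only [Finset.mem_biUnion, Finset.mem_range, tailPD_e] at hy2
          obtain ⟨-, -, hy0⟩ := hy1
          obtain ⟨j, hj, hyj⟩ := hy2
          rcases Nat.eq_zero_or_pos j with rfl | hjpos
          · have : y ∈ pd.e 0 ∩ pd.e 1 := Finset.mem_inter.mpr ⟨hy0, hyj⟩
            have hone : pd.e 0 ∩ pd.e 1 = {u} := by
              obtain ⟨z, hz⟩ := Finset.card_eq_one.mp (pd.hcons 0 (by omega))
              rw [hz] at huu ⊢
              rw [Finset.mem_singleton] at huu
              rw [huu]
            rw [hone, Finset.mem_singleton] at this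
            exact this
          · have := pd.hfar 0 (j + 1) (by omega) (by omega)
            exact absurd (Finset.mem_inter.mpr ⟨hy0, hyj⟩) (by simp [this])

/-- Extracting a path from the root of a cycle to any other vertex of the cycle,
using only edges of the cycle. -/
theorem cycle_path {H : MB.MarkedHypergraph V} {a : V} {L : ℕ} (cd : CData H a L)
    (w : V) (i : ℕ) (hi : i < L) (hw : w ∈ cd.e i) (hwa : w ≠ a) :
    ∃ k, ∃ pd : PData H a w k, ∀ j, j < k → ∃ t, t < L ∧ pd.e j = cd.e t := by
  have hL := cd.hL
  by_cases h0 : w ∈ cd.e 0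
  · exact ⟨1, singlePD H (cd.hsub 0 (by omega)) (cd.hcard 0 (by omega)) cd.ha0 h0
      (Ne.symm hwa), fun j hj => ⟨0, by omega, rfl⟩⟩
  · by_cases hlast : w ∈ cd.e (L - 1)
    · exact ⟨1, singlePD H (cd.hsub (L - 1) (by omega)) (cd.hcard (L - 1) (by omega)) cd.haL
        hlast (Ne.symm hwa), fun j hj => ⟨L - 1, by omega, rfl⟩⟩
    · have hex : ∃ j, j < L ∧ w ∈ cd.e j := ⟨i, hi, hw⟩
      obtain ⟨hi0L, hwi0⟩ := Nat.find_spec hex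
      have hmin : ∀ j, j < Nat.find hex → w ∉ cd.e j := fun j hj hmem =>
        Nat.find_min hex hj ⟨by omega, hmem⟩
      have h1 : Nat.find hex ≠ 0 := fun h => h0 (h ▸ hwi0)
      have h2 : Nat.find hex ≠ L - 1 := fun h => hlast (h ▸ hwi0)
      have hL3 : 3 ≤ L := by omega
      refine ⟨Nat.find hex + 1, ⟨cd.e, by omega, Ne.symm hwa, fun j hj => cd.hsub j (by omega),
        fun j hj => cd.hcard j (by omega),
        fun j k hj hk => cd.hdist j k (by omega) (by omega),
        cd.ha0, by simpa using hwi0,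
        fun j hj => (cd.h3 hL3).2 j (by omega),
        fun j k hjk hk => cd.hfar j k (by omega) (by omega) (by omega) (by omega),
        fun j hj1 hj2 => cd.hna j (by omega) (by omega),
        fun j hj => hmin j (by omega)⟩, fun j hj => ⟨j, by omega, rfl⟩⟩

/-- Lemma B: `H` contains no cycle rooted at a marked vertex. -/
theorem lemB (H : MB.MarkedHypergraph V) (hval : H.IsValid) (hnt : ¬ H.TrivialMakerWin)
    (hJ : MB.J MB.famD0 1 H) :
    ∀ L a, CData H a L → a ∈ H.marked → False := by
  intro L a cd haM
  have hL := cd.hL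
  by_cases hw : ∃ i, i < L ∧ ∃ w, w ∈ cd.e i ∧ w ≠ a ∧ w ∈ H.marked
  · obtain ⟨i, hi, w, hwi, hwa, hwM⟩ := hw
    obtain ⟨k, pd, -⟩ := cycle_path cd w i hi hwi hwa
    exact lemA H hval hnt hJ k a w pd haM hwM
  · push_neg at hw
    obtain ⟨u, hu0, hu1, hua⟩ : ∃ u, u ∈ cd.e 0 ∧ u ∈ cd.e 1 ∧ u ≠ a := by
      rcases eq_or_lt_of_le hL with h1 | h1
      · have hc := cd.h2 h1.symm
        obtain ⟨u, huin, hua⟩ := Finset.exists_mem_ne (s := cd.e 0 ∩ cd.e 1) (by omega) a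
        rw [Finset.mem_inter] at huin
        exact ⟨u, huin.1, huin.2, hua⟩
      · obtain ⟨u, hu⟩ := Finset.card_eq_one.mp ((cd.h3 (by omega)).2 0 (by omega))
        have huin : u ∈ cd.e 0 ∩ cd.e 1 := hu ▸ Finset.mem_singleton_self u
        rw [Finset.mem_inter] at huin
        exact ⟨u, huin.1, huin.2, fun h => cd.hna 1 (by omega) (by omega) (h ▸ huin.2)⟩
    have huM : u ∉ H.marked := hw 0 (by omega) u hu0 hua
    have huV : u ∈ H.verts := (hval.2.1 _ (cd.hsub 0 (by omega))).1 hu0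
    refine lemJ hJ huV huM
      (snakeX hval
        (singlePD H (cd.hsub 0 (by omega)) (cd.hcard 0 (by omega)) hu0 cd.ha0 hua) haM ?_)
      (snakeX hval (ctailPD cd u hu0 hu1 hua) haM ?_) ?_
    · simp only [singlePD_e]
      intro i hi w hwi hwa2
      exact hw 0 (by omega) w hwi hwa2
    · simp only [ctailPD_e]
      intro i hi w hwi hwa2
      exact hw (i + 1) (by omega) w hwi hwa2
    · intro y hy1 hy2 hyM
      simp only [Finset.mem_biUnion, Finset.mem_range, singlePD_e] at hy1
      simp only [Finset.mem_biUnion, Finset.mem_range, ctailPD_e] at hy2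
      obtain ⟨-, -, hy0⟩ := hy1
      obtain ⟨j, hj, hyj⟩ := hy2
      have hya : y ≠ a := fun h => hyM (h ▸ haM)
      rcases Nat.eq_zero_or_pos j with rfl | hjpos
      · have hyin : y ∈ cd.e 0 ∩ cd.e 1 := Finset.mem_inter.mpr ⟨hy0, hyj⟩
        rcases eq_or_lt_of_le hL with h1 | h1
        · -- L = 2
          have hc := cd.h2 h1.symm
          have haLin : a ∈ cd.e 1 := by
            have := cd.haL
            rw [show L - 1 = 1 by omega] at this
            exact this
          have hsubau : ({a, u} : Finset V) ⊆ cd.e 0 ∩ cd.e 1 := by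
            intro x hx
            rcases Finset.mem_insert.mp hx with rfl | hx
            · exact Finset.mem_inter.mpr ⟨cd.ha0, haLin⟩
            · rw [Finset.mem_singleton] at hx; subst hx
              exact Finset.mem_inter.mpr ⟨hu0, hu1⟩
          have heq : cd.e 0 ∩ cd.e 1 = {a, u} :=
            (Finset.eq_of_subset_of_card_le hsubau
              (by rw [hc, Finset.card_pair (Ne.symm hua)])).symm
          rw [heq, Finset.mem_insert, Finset.mem_singleton] at hyin
          rcases hyin with rfl | rfl
          · exact absurd rfl hya
          · rfl
        · -- 3 ≤ L
          have hone : cd.e 0 ∩ cd.e 1 = {u} := by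
            obtain ⟨z, hz⟩ := Finset.card_eq_one.mp ((cd.h3 (by omega)).2 0 (by omega))
            have : u ∈ ({z} : Finset V) := hz ▸ Finset.mem_inter.mpr ⟨hu0, hu1⟩
            rw [Finset.mem_singleton] at this
            rw [hz, this]
          rw [hone, Finset.mem_singleton] at hyin
          exact hyin
      · -- j ≥ 1, so L ≥ 3
        have hL3 : 3 ≤ L := by omega
        by_cases hend : j + 1 = L - 1
        · have h3 := (cd.h3 hL3).1
          have : y ∈ cd.e 0 ∩ cd.e (L - 1) := Finset.mem_inter.mpr ⟨hy0, hend ▸ hyj⟩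
          rw [h3, Finset.mem_singleton] at this
          exact absurd this hya
        · have := cd.hfar 0 (j + 1) (by omega) (by omega) (by omega) (by omega)
          exact absurd (Finset.mem_inter.mpr ⟨hy0, hyj⟩) (by simp [this])

/-- No `m`-tadpole with `m` marked. -/
theorem lemTad (H : MB.MarkedHypergraph V) (hval : H.IsValid) (hnt : ¬ H.TrivialMakerWin)
    (hJ : MB.J MB.famD0 1 H) {m : V} (hm : m ∈ H.marked) {T : MB.MarkedHypergraph V}
    (hsubT : T.IsSub H) (ht : MB.IsTadpole T m) : False := by
  obtain ⟨b, P, C, ⟨l, hP⟩, ⟨Lc, hC⟩, hmeet, hTv, hTe⟩ := ht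
  have hPE : P.edges ⊆ H.edges := fun e he => hsubT.2.1 (hTe ▸ Finset.mem_union_left _ he)
  have hCE : C.edges ⊆ H.edges := fun e he => hsubT.2.1 (hTe ▸ Finset.mem_union_right _ he)
  obtain ⟨cd, hCv, hCe⟩ := cdata_of_isCycleLen hCE hC
  have hLc := cd.hL
  rcases hP with ⟨h0, hmb, hPv0, hPe0⟩ | hPright
  · -- l = 0 : the tadpole is a cycle rooted at the marked vertex m = b
    subst hmb
    exact lemB H hval hnt hJ Lc m cd hm
  · obtain ⟨hl1, hmb, f, hPe, hPv, hfcard, hfdist, hfa, hfb, hfcons, hffar, hfna, hfnb⟩ :=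
      hPright
    have hP' : MB.IsPathLen P m b l := Or.inr ⟨hl1, hmb, f, hPe, hPv, hfcard, hfdist, hfa,
      hfb, hfcons, hffar, hfna, hfnb⟩
    obtain ⟨pdP, hpdPe⟩ : ∃ pd : PData H m b l, pd.e = f :=
      ⟨⟨f, hl1, hmb, fun i hi => hPE (hPe ▸ Finset.mem_image_of_mem f (Finset.mem_range.mpr hi)),
        hfcard, hfdist, hfa, hfb, hfcons, hffar, hfna, hfnb⟩, rfl⟩
    have hfP : ∀ i, i < l → pdP.e i ⊆ P.verts := by
      intro i hi
      rw [hpdPe, hPv]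
      exact Finset.subset_biUnion_of_mem f (Finset.mem_range.mpr hi)
    have hbM : b ∉ H.marked := fun hbm => lemA H hval hnt hJ l m b pdP hm hbm
    have hcycM : ∀ i, i < Lc → ∀ w, w ∈ cd.e i → w ≠ b → w ∉ H.marked := by
      intro i hi w hwi hwb hwM
      obtain ⟨k, pdQ, hprov⟩ := cycle_path cd w i hi hwi hwb
      have hfC : ∀ j, j < k → pdQ.e j ⊆ C.verts := by
        intro j hj
        obtain ⟨t, ht, hte⟩ := hprov j hj
        rw [hte, hCv]
        exact Finset.subset_biUnion_of_mem cd.e (Finset.mem_range.mpr ht)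
      exact lemA H hval hnt hJ (l + k) m w
        (concatPD pdP pdQ P.verts C.verts hfP hfC hmeet) hm hwM
    have hpathM : ∀ i, i < l → ∀ w, w ∈ f i → w ≠ m → w ∉ H.marked := by
      intro i hi w hwi hwm hwM
      have hex : ∃ j, j < l ∧ w ∈ f j := ⟨i, hi, hwi⟩
      obtain ⟨hi0, hwi0⟩ := Nat.find_spec hex
      have hmin : ∀ j, j < Nat.find hex → w ∉ pdP.e j := by
        rw [hpdPe]
        exact fun j hj hmem => Nat.find_min hex hj ⟨by omega, hmem⟩
      refine lemA H hval hnt hJ _ m w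
        (truncPD pdP (Nat.find hex) w hi0 ?_ hwm hmin) hm hwM
      rw [hpdPe]
      exact hwi0
    have hbV : b ∈ H.verts := (hval.2.1 _ (cd.hsub 0 (by omega))).1 cd.ha0
    have hbC : b ∈ C.verts := by
      rw [hCv]
      exact Finset.mem_biUnion.mpr ⟨0, Finset.mem_range.mpr (by omega), cd.ha0⟩
    have hbP : b ∈ P.verts := by
      rw [hPv]
      exact Finset.mem_biUnion.mpr ⟨l - 1, Finset.mem_range.mpr (by omega), hfb⟩
    have hmP : m ∈ P.verts := by
      rw [hPv]
      exact Finset.mem_biUnion.mpr ⟨0, Finset.mem_range.mpr (by omega), hfa⟩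
    have hXc : (⟨C.verts, C.edges, C.verts ∩ H.marked⟩ : MB.MarkedHypergraph V)
        ∈ MB.xFam MB.famD0 H b := by
      have hmk : C.verts ∩ H.marked = ∅ := by
        rw [Finset.eq_empty_iff_forall_notMem]
        intro w hwin
        rw [Finset.mem_inter] at hwin
        obtain ⟨hwv, hwM⟩ := hwin
        rw [hCv, Finset.mem_biUnion] at hwv
        obtain ⟨i, hi, hwi⟩ := hwv
        by_cases hwb : w = b
        · exact hbM (hwb ▸ hwM)
        · exact hcycM i (Finset.mem_range.mp hi) w hwi hwb hwM
      apply mem_xFam_self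
      · refine ⟨⟨b, hbC⟩, ?_, Finset.inter_subset_left⟩
        intro e he
        have he2 := he
        rw [hCe, Finset.mem_image] at he2
        obtain ⟨i, hi, rfl⟩ := he2
        refine ⟨by rw [hCv]; exact Finset.subset_biUnion_of_mem cd.e hi, ?_⟩
        have := cd.hcard i (Finset.mem_range.mp hi)
        exact Finset.card_pos.mp (by omega)
      · refine ⟨?_, hCE, rfl⟩
        rw [hCv]
        intro y hy
        rw [Finset.mem_biUnion] at hy
        obtain ⟨i, hi, hyi⟩ := hy
        exact (hval.2.1 _ (cd.hsub i (Finset.mem_range.mp hi))).1 hyi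
      · exact hbC
      · refine Or.inr ⟨⟨Lc, isCycleLen_congr rfl rfl hC⟩, hmk⟩
    have hXp : (⟨P.verts, P.edges, P.verts ∩ H.marked⟩ : MB.MarkedHypergraph V)
        ∈ MB.xFam MB.famD0 H b := by
      have hmk : P.verts ∩ H.marked = {m} := by
        apply Finset.ext
        intro w
        rw [Finset.mem_inter, Finset.mem_singleton]
        constructor
        · rintro ⟨hwv, hwM⟩
          by_contra hwm
          rw [hPv, Finset.mem_biUnion] at hwv
          obtain ⟨i, hi, hwi⟩ := hwv
          exact hpathM i (Finset.mem_range.mp hi) w hwi hwm hwM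
        · rintro rfl
          exact ⟨hmP, hm⟩
      apply mem_xFam_self
      · refine ⟨⟨b, hbP⟩, ?_, Finset.inter_subset_left⟩
        intro e he
        have he2 := he
        rw [hPe, Finset.mem_image] at he2
        obtain ⟨i, hi, rfl⟩ := he2
        refine ⟨by rw [hPv]; exact Finset.subset_biUnion_of_mem f hi, ?_⟩
        have := hfcard i (Finset.mem_range.mp hi)
        exact Finset.card_pos.mp (by omega)
      · refine ⟨?_, hPE, rfl⟩
        rw [hPv]
        intro y hy
        rw [Finset.mem_biUnion] at hy
        obtain ⟨i, hi, hyi⟩ := hy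
        exact (hval.2.1 _ (pdP.hsub i (Finset.mem_range.mp hi))).1 (by rwa [hpdPe])
      · exact hbP
      · refine Or.inl ⟨⟨m, l, hl1, isPathLen_congr rfl rfl (isPathLen_rev hP'), ?_⟩, ?_⟩
        · show m ∈ P.verts ∩ H.marked
          rw [hmk]; exact Finset.mem_singleton_self m
        · show (P.verts ∩ H.marked).card = 1
          rw [hmk]; exact Finset.card_singleton m
    refine lemJ hJ hbV hbM hXc hXp ?_
    intro y hy1 hy2 hyM
    have hyin : y ∈ P.verts ∩ C.verts := Finset.mem_inter.mpr ⟨hy2, hy1⟩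
    rw [hmeet, Finset.mem_singleton] at hyin
    exact hyin

end Aux

/-- Proposition 3.20: under `J_1(𝒟₀,H)`, no marked vertex admits a tadpole or a snake. -/
theorem statement19 {V : Type} [DecidableEq V] (H : MB.MarkedHypergraph V)
    (hval : H.IsValid) (hnt : ¬ H.TrivialMakerWin)
    (hcard : 2 ≤ (H.verts \ H.marked).card) (hJ : MB.J MB.famD0 1 H) :
    ∀ m ∈ H.marked,
      (¬ ∃ T, MB.MarkedHypergraph.IsSub T H ∧ MB.IsTadpole T m) ∧
      (¬ ∃ S, MB.MarkedHypergraph.IsSub S H ∧ MB.IsSnake S m) := by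
  intro m hm
  constructor
  · rintro ⟨T, hsub, ht⟩
    exact lemTad H hval hnt hJ hm hsub ht
  · rintro ⟨S, hsub, hS⟩
    obtain ⟨m', L, hL, hp, hm'⟩ := hS
    obtain ⟨pd, -, -⟩ := pdata_of_isPathLen hsub.2.1 hp hL
    have hm'M : m' ∈ H.marked := by
      rw [hsub.2.2] at hm'
      exact (Finset.mem_inter.mp hm').2
    exact lemA H hval hnt hJ L m m' pd hm hm'M
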